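/- Let G be a graph of size q and f a local antimagic labeling of G such that: (i) for all vertices x, y, f⁺(x) = f⁺(y) implies deg(x) = deg(y); and (ii) f⁺(x) ≠ f⁺(y) implies (q+1)(deg(x) − deg(y)) ≠ f⁺(x) − f⁺(y). Then g = q + 1 − f is also a local antimagic labeling of G with the same number of distinct induced vertex labels as f. -/

import Mathlib

open Finset

namespace LocalAntimagic

variable {V : Type*} [Fintype V] [DecidableEq V]

/-- The induced vertex label: sum of labels of edges incident to `v`. -/
def inducedSum (G : SimpleGraph V) [DecidableRel G.Adj] (f : Sym2 V → ℕ) (v : V) : ℕ :=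
  ∑ e ∈ G.incidenceFinset v, f e

/-- `f` is a local antimagic labeling of `G`: a bijection from the edge set onto
`{1, …, q}` (`q` the number of edges) such that adjacent vertices get distinct
induced sums. -/
def IsLocalAntimagic (G : SimpleGraph V) [DecidableRel G.Adj] (f : Sym2 V → ℕ) : Prop :=
  Set.BijOn f G.edgeSet (Set.Icc 1 G.edgeFinset.card) ∧
  ∀ ⦃u v⦄, G.Adj u v → inducedSum G f u ≠ inducedSum G f v

/-- The number of distinct induced vertex labels under `f`. -/
def colorCount (G : SimpleGraph V) [DecidableRel G.Adj] (f : Sym2 V → ℕ) : ℕ :=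
  (Finset.image (inducedSum G f) Finset.univ).card

/-- The local antimagic chromatic number of `G` (`⊤` if no local antimagic
labeling exists). -/
noncomputable def chiLA (G : SimpleGraph V) [DecidableRel G.Adj] : ℕ∞ :=
  sInf {n : ℕ∞ | ∃ f : Sym2 V → ℕ, IsLocalAntimagic G f ∧ (colorCount G f : ℕ∞) = n}

/-- The circulant graph on `ℤ/nℤ` with connection set `S`. -/
def circulant (n : ℕ) [NeZero n] (S : Finset (ZMod n)) : SimpleGraph (ZMod n) where
  Adj u v := u ≠ v ∧ (u - v ∈ S ∨ v - u ∈ S)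
  symm := ⟨fun u v h => ⟨h.1.symm, h.2.symm⟩⟩
  loopless := ⟨fun v h => h.1 rfl⟩

instance (n : ℕ) [NeZero n] (S : Finset (ZMod n)) : DecidableRel (circulant n S).Adj :=
  fun u v => inferInstanceAs (Decidable (u ≠ v ∧ (u - v ∈ S ∨ v - u ∈ S)))

/-- The cycle `C_n` as a circulant graph on `ℤ/nℤ`. -/
def cycle (n : ℕ) [NeZero n] : SimpleGraph (ZMod n) := circulant n {1}

instance (n : ℕ) [NeZero n] : DecidableRel (cycle n).Adj :=
  inferInstanceAs (DecidableRel (circulant n {1}).Adj)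

/-- The graph obtained from `G` by merging vertices according to the
identification map `q` (adjacent iff distinct and some preimages are adjacent). -/
def mergeGraph {V' W : Type*} (G : SimpleGraph V') (q : V' → W) : SimpleGraph W where
  Adj a b := a ≠ b ∧ ∃ u v, q u = a ∧ q v = b ∧ G.Adj u v
  symm := by
    refine ⟨?_⟩
    rintro a b ⟨hab, u, v, hu, hv, huv⟩
    exact ⟨hab.symm, v, u, hv, hu, huv.symm⟩
  loopless := ⟨fun a h => h.1 rfl⟩

end LocalAntimagic
open LocalAntimagic in
/-- if equal induced sums force equal degrees and
`(q+1)(deg x − deg y) ≠ f⁺(x) − f⁺(y)` whenever `f⁺(x) ≠ f⁺(y)`, then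
`g = q + 1 − f` is local antimagic with the same number of induced labels. -/
theorem stmt5 {V : Type*} [Fintype V] [DecidableEq V] (G : SimpleGraph V)
    [DecidableRel G.Adj] (f : Sym2 V → ℕ) (hf : IsLocalAntimagic G f)
    (h1 : ∀ x y : V, inducedSum G f x = inducedSum G f y → G.degree x = G.degree y)
    (h2 : ∀ x y : V, inducedSum G f x ≠ inducedSum G f y →
      ((G.edgeFinset.card : ℤ) + 1) * ((G.degree x : ℤ) - (G.degree y : ℤ)) ≠
        (inducedSum G f x : ℤ) - (inducedSum G f y : ℤ)) :
    IsLocalAntimagic G (fun e => G.edgeFinset.card + 1 - f e) ∧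
    colorCount G (fun e => G.edgeFinset.card + 1 - f e) = colorCount G f := by

  classical
  set q := G.edgeFinset.card with hq
  set g : Sym2 V → ℕ := fun e => q + 1 - f e with hg
  -- each incident edge is in edge set, so f e ∈ Icc 1 q
  have hmem : ∀ v : V, ∀ e ∈ G.incidenceFinset v, f e ∈ Set.Icc 1 q := by
    intro v e he
    rw [SimpleGraph.mem_incidenceFinset] at he
    exact hf.1.mapsTo (G.incidenceSet_subset v he)
  -- key identity
  have key : ∀ v : V, inducedSum G g v + inducedSum G f v = (q + 1) * G.degree v := by
    intro v
    unfold inducedSum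
    rw [← Finset.sum_add_distrib]
    have : ∀ e ∈ G.incidenceFinset v, g e + f e = q + 1 := by
      intro e he
      have := hmem v e he
      simp only [Set.mem_Icc] at this
      simp only [hg]
      omega
    rw [Finset.sum_congr rfl this, Finset.sum_const, smul_eq_mul,
      G.card_incidenceFinset_eq_degree v, mul_comm]
  -- the iff on induced sums
  have keyiff : ∀ x y : V, inducedSum G g x = inducedSum G g y ↔
      inducedSum G f x = inducedSum G f y := by
    intro x y
    constructor
    · intro hgxy
      by_contra hne
      apply h2 x y hne
      have kx := key x
      have ky := key y
      have : ((inducedSum G g x : ℤ)) + inducedSum G f x = (q + 1) * G.degree x := by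
        exact_mod_cast congrArg (Nat.cast : ℕ → ℤ) kx
      have hy' : ((inducedSum G g y : ℤ)) + inducedSum G f y = (q + 1) * G.degree y := by
        exact_mod_cast congrArg (Nat.cast : ℕ → ℤ) ky
      have hgg : (inducedSum G g x : ℤ) = inducedSum G g y := by exact_mod_cast hgxy
      ring_nf
      ring_nf at this hy'
      linarith
    · intro hfxy
      have hd := h1 x y hfxy
      have kx := key x
      have ky := key y
      rw [hd] at kx
      omega
  constructor
  · constructor
    · -- BijOn
      have hbij : Set.BijOn (fun x => q + 1 - x) (Set.Icc 1 q) (Set.Icc (1:ℕ) q) := by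
        refine ⟨?_, ?_, ?_⟩
        · intro x hx; simp only [Set.mem_Icc] at *; omega
        · intro x hx y hy hxy; simp only [Set.mem_Icc] at *; omega
        · intro y hy
          simp only [Set.mem_Icc] at hy
          exact ⟨q + 1 - y, by simp only [Set.mem_Icc]; omega, by simp; omega⟩
      exact hbij.comp hf.1
    · intro u v huv
      intro h
      exact hf.2 huv ((keyiff u v).mp h)
  · -- colorCount
    unfold colorCount
    apply Finset.card_bij (fun a _ => inducedSum G f (Classical.choose
      (by simpa using (Finset.mem_image.mp ‹a ∈ Finset.image (inducedSum G g) Finset.univ›)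
        : ∃ v, inducedSum G g v = a)))
    · intro a ha
      exact Finset.mem_image.mpr ⟨_, Finset.mem_univ _, rfl⟩
    · intro a₁ ha₁ a₂ ha₂ h
      have s₁ := Classical.choose_spec (by simpa using (Finset.mem_image.mp ha₁)
        : ∃ v, inducedSum G g v = a₁)
      have s₂ := Classical.choose_spec (by simpa using (Finset.mem_image.mp ha₂)
        : ∃ v, inducedSum G g v = a₂)
      rw [← s₁, ← s₂]
      exact (keyiff _ _).mpr h
    · intro b hb
      obtain ⟨w, -, hw⟩ := Finset.mem_image.mp hb
      refine ⟨inducedSum G g w, Finset.mem_image.mpr ⟨w, Finset.mem_univ _, rfl⟩, ?_⟩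
      have s := Classical.choose_spec (by simpa using (Finset.mem_image.mp
        (Finset.mem_image.mpr ⟨w, Finset.mem_univ _, rfl⟩ : inducedSum G g w ∈
          Finset.image (inducedSum G g) Finset.univ))
        : ∃ v, inducedSum G g v = inducedSum G g w)
      rw [← hw]
      exact (keyiff _ _).mp s
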